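/- If ν has a non-trivial absolutely continuous part with respect to Lebesgue measure Λ (i.e. in the Lebesgue decomposition ν = ν_ac + ν_sing with ν_ac ≪ Λ one has ν_ac ≠ 0), then β_ν(s) = m·(1−s) for all s ∈ (0,1) (claim in Remark 1.2, via Jensen's inequality). -/

import Mathlib

open MeasureTheory Filter
open scoped ENNReal Topology

noncomputable section

/-- The half-open unit cube `(0,1]^m`. -/
def unitCube (m : ℕ) : Set (Fin m → ℝ) := {x | ∀ i, x i ∈ Set.Ioc (0 : ℝ) 1}

/-- The half-open dyadic cube of generation `n` indexed by `l ∈ ℤ^m`. -/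
def dyadicCube (m n : ℕ) (l : Fin m → ℤ) : Set (Fin m → ℝ) :=
  {x | ∀ i, x i ∈ Set.Ioc ((l i : ℝ) / 2 ^ n) (((l i : ℝ) + 1) / 2 ^ n)}

/-- `β_n^ν(s) = log (∑_{C ∈ 𝒟_n} ν(C)^s) / log (2^n)`, the sum running over all
dyadic cubes of generation `n` with positive `ν`-measure. -/
def betaN (m : ℕ) (ν : Measure (Fin m → ℝ)) (n : ℕ) (s : ℝ) : ℝ :=
  Real.log (∑' l : {l : Fin m → ℤ // 0 < ν (dyadicCube m n l)},
      (ν (dyadicCube m n l.1)).toReal ^ s) / Real.log ((2 : ℝ) ^ n)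

/-- The `L^q`-spectrum `β_ν(s) = limsup_n β_n^ν(s)`. -/
def lqSpectrum (m : ℕ) (ν : Measure (Fin m → ℝ)) (s : ℝ) : ℝ :=
  limsup (fun n => betaN m ν n s) atTop

/-- `s_b = inf {s > 0 : β_ν(s) - b·s ≤ 0}`. -/
def sb (m : ℕ) (ν : Measure (Fin m → ℝ)) (b : ℝ) : ℝ :=
  sInf {s : ℝ | 0 < s ∧ lqSpectrum m ν s - b * s ≤ 0}


/-! ### Auxiliary geometry lemmas -/

lemma unitCube_eq (m : ℕ) : unitCube m = Set.pi Set.univ (fun _ => Set.Ioc (0:ℝ) 1) := by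
  ext x; simp [unitCube, Set.mem_pi]

lemma dyadicCube_eq (m n : ℕ) (l : Fin m → ℤ) :
    dyadicCube m n l
      = Set.pi Set.univ (fun i => Set.Ioc ((l i : ℝ) / 2 ^ n) (((l i : ℝ) + 1) / 2 ^ n)) := by
  ext x; simp [dyadicCube, Set.mem_pi]

lemma measurableSet_unitCube (m : ℕ) : MeasurableSet (unitCube m) := by
  rw [unitCube_eq]; exact MeasurableSet.univ_pi fun i => measurableSet_Ioc

lemma measurableSet_dyadicCube (m n : ℕ) (l : Fin m → ℤ) :
    MeasurableSet (dyadicCube m n l) := by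
  rw [dyadicCube_eq]; exact MeasurableSet.univ_pi fun i => measurableSet_Ioc

lemma volume_unitCube (m : ℕ) : volume (unitCube m) = 1 := by
  rw [unitCube_eq, volume_pi_pi]
  simp [Real.volume_Ioc]

lemma volume_dyadicCube (m n : ℕ) (l : Fin m → ℤ) :
    volume (dyadicCube m n l) = ENNReal.ofReal (((2:ℝ) ^ n)⁻¹) ^ m := by
  rw [dyadicCube_eq, volume_pi_pi]
  have : ∀ i : Fin m, volume (Set.Ioc ((l i : ℝ) / 2 ^ n) (((l i : ℝ) + 1) / 2 ^ n))
      = ENNReal.ofReal (((2:ℝ) ^ n)⁻¹) := by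
    intro i
    rw [Real.volume_Ioc]
    congr 1
    field_simp
    ring
  simp [this]

lemma pairwiseDisjoint_dyadicCube (m n : ℕ) :
    Set.PairwiseDisjoint (Set.univ : Set (Fin m → ℤ)) (dyadicCube m n) := by
  intro l _ l' _ hne
  refine Set.disjoint_left.2 fun x hx hx' => ?_
  obtain ⟨i, hi⟩ := Function.ne_iff.1 hne
  have h1 := hx i
  have h2 := hx' i
  have hp : (0:ℝ) < 2 ^ n := by positivity
  rcases lt_or_gt_of_ne hi with h | h
  · have : (l i : ℝ) + 1 ≤ l' i := by exact_mod_cast h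
    have : ((l i : ℝ) + 1) / 2 ^ n ≤ (l' i : ℝ) / 2 ^ n := by gcongr
    exact absurd (h2.1.trans_le h1.2) (not_lt.2 this)
  · have : (l' i : ℝ) + 1 ≤ l i := by exact_mod_cast h
    have : ((l' i : ℝ) + 1) / 2 ^ n ≤ (l i : ℝ) / 2 ^ n := by gcongr
    exact absurd (h1.1.trans_le h2.2) (not_lt.2 this)

/-- the index box: all `l` whose dyadic cube lies in the unit cube -/
def boxIdx (m n : ℕ) : Finset (Fin m → ℤ) :=
  Fintype.piFinset fun _ : Fin m => Finset.Ico (0:ℤ) (2 ^ n)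

lemma mem_boxIdx {m n : ℕ} {l : Fin m → ℤ} :
    l ∈ boxIdx m n ↔ ∀ i, 0 ≤ l i ∧ l i < 2 ^ n := by
  simp [boxIdx, Fintype.mem_piFinset, Finset.mem_Ico]

lemma card_boxIdx (m n : ℕ) : (boxIdx m n).card = 2 ^ (n * m) := by
  simp only [boxIdx, Fintype.card_piFinset, Int.card_Ico, Finset.prod_const, Finset.card_univ,
    Fintype.card_fin]
  rw [sub_zero]
  have : (2:ℤ)^n = ((2^n : ℕ) : ℤ) := by push_cast; ring
  rw [this, Int.toNat_natCast, ← pow_mul]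

lemma dyadicCube_subset_unitCube {m n : ℕ} {l : Fin m → ℤ} (hl : l ∈ boxIdx m n) :
    dyadicCube m n l ⊆ unitCube m := by
  intro x hx i
  obtain ⟨h0, h1⟩ := mem_boxIdx.1 hl i
  have hp : (0:ℝ) < 2 ^ n := by positivity
  have hx1 := (hx i).1
  have hx2 := (hx i).2
  constructor
  · have : (0:ℝ) ≤ (l i : ℝ) / 2 ^ n := by
      apply div_nonneg _ hp.le; exact_mod_cast h0
    linarith
  · have : ((l i : ℝ) + 1) / 2 ^ n ≤ 1 := by
      rw [div_le_one hp]
      have : (l i : ℝ) + 1 ≤ 2 ^ n := by exact_mod_cast h1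
      simpa using this
    linarith

lemma unitCube_subset_iUnion (m n : ℕ) :
    unitCube m ⊆ ⋃ l ∈ boxIdx m n, dyadicCube m n l := by
  intro x hx
  have hp : (0:ℝ) < 2 ^ n := by positivity
  have : (fun i => ⌈(2:ℝ) ^ n * x i⌉ - 1) ∈ boxIdx m n := by
    rw [mem_boxIdx]
    intro i
    constructor
    · have : 0 < ⌈(2:ℝ) ^ n * x i⌉ := Int.lt_ceil.2 (by simpa using mul_pos hp (hx i).1)
      omega
    · have : ⌈(2:ℝ) ^ n * x i⌉ ≤ 2 ^ n := by
        apply Int.ceil_le.2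
        push_cast
        nlinarith [(hx i).2, hp]
      omega
  refine Set.mem_biUnion this ?_
  intro i
  simp only
  have h1 : ((⌈(2:ℝ) ^ n * x i⌉ : ℝ) - 1) < 2 ^ n * x i := by
    have := Int.ceil_lt_add_one ((2:ℝ) ^ n * x i)
    linarith
  have h2 : (2:ℝ) ^ n * x i ≤ (⌈(2:ℝ) ^ n * x i⌉ : ℝ) := Int.le_ceil _
  constructor
  · rw [div_lt_iff₀ hp]
    push_cast
    linarith [h1]
  · rw [le_div_iff₀ hp]
    push_cast
    linarith [h2]

lemma iUnion_dyadicCube (m n : ℕ) :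
    ⋃ l ∈ boxIdx m n, dyadicCube m n l = unitCube m := by
  apply le_antisymm
  · exact Set.iUnion₂_subset fun l hl => dyadicCube_subset_unitCube hl
  · exact unitCube_subset_iUnion m n

/-! ### Measure lemmas -/

section MeasureLemmas

variable {m n : ℕ} {ν : Measure (Fin m → ℝ)}

lemma compl_unitCube_zero [IsProbabilityMeasure ν] (hν : ν (unitCube m) = 1) :
    ν (unitCube m)ᶜ = 0 := by
  rw [measure_compl (measurableSet_unitCube m) (measure_ne_top ν _), hν, measure_univ, tsub_self]

lemma mem_boxIdx_of_pos [IsProbabilityMeasure ν] (hν : ν (unitCube m) = 1)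
    {l : Fin m → ℤ} (h : 0 < ν (dyadicCube m n l)) : l ∈ boxIdx m n := by
  have h0 : ν (dyadicCube m n l ∩ unitCube m) ≠ 0 := by
    intro hz
    have hsub : dyadicCube m n l ⊆ (dyadicCube m n l ∩ unitCube m) ∪ (unitCube m)ᶜ := by
      intro x hx
      by_cases hu : x ∈ unitCube m
      · exact Or.inl ⟨hx, hu⟩
      · exact Or.inr hu
    have : ν (dyadicCube m n l) ≤ ν (dyadicCube m n l ∩ unitCube m) + ν (unitCube m)ᶜ :=
      (measure_mono hsub).trans (measure_union_le _ _)
    rw [hz, compl_unitCube_zero hν, add_zero] at this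
    exact absurd this (not_le.2 h)
  obtain ⟨x, hxc, hxu⟩ := nonempty_of_measure_ne_zero h0
  rw [mem_boxIdx]
  intro i
  have hp : (0:ℝ) < 2 ^ n := by positivity
  have h1 := (hxc i).1
  have h2 := (hxc i).2
  have h3 := (hxu i).1
  have h4 := (hxu i).2
  constructor
  · have : (0:ℝ) < (l i : ℝ) + 1 := by
      have hd : (0:ℝ) < ((l i : ℝ) + 1) / 2 ^ n := lt_of_lt_of_le h3 h2
      rcases div_pos_iff.1 hd with ⟨hh, _⟩ | ⟨_, hh⟩
      · exact hh
      · linarith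
    have : (0:ℤ) < l i + 1 := by exact_mod_cast this
    omega
  · have : (l i : ℝ) < 2 ^ n := by
      have hd : (l i : ℝ) / 2 ^ n < 1 := lt_of_lt_of_le h1 h4
      exact (div_lt_one hp).1 hd
    exact_mod_cast this

lemma tsum_eq_sum_box [IsProbabilityMeasure ν] (hν : ν (unitCube m) = 1) {s : ℝ} (hs : s ≠ 0) :
    (∑' l : {l : Fin m → ℤ // 0 < ν (dyadicCube m n l)},
      (ν (dyadicCube m n l.1)).toReal ^ s)
      = ∑ l ∈ boxIdx m n, (ν (dyadicCube m n l)).toReal ^ s := by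
  rw [show (∑' l : {l : Fin m → ℤ // 0 < ν (dyadicCube m n l)},
      (ν (dyadicCube m n l.1)).toReal ^ s)
      = ∑' l : {l : Fin m → ℤ | 0 < ν (dyadicCube m n l)},
      (ν (dyadicCube m n l.1)).toReal ^ s from rfl,
    tsum_subtype {l : Fin m → ℤ | 0 < ν (dyadicCube m n l)}
      (fun l => (ν (dyadicCube m n l)).toReal ^ s)]
  rw [tsum_eq_sum (s := boxIdx m n) (by
    intro l hl
    rw [Set.indicator_apply_eq_zero]
    intro hpos
    exact absurd (mem_boxIdx_of_pos hν hpos) hl)]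
  apply Finset.sum_congr rfl
  intro l _
  by_cases hpos : 0 < ν (dyadicCube m n l)
  · rw [Set.indicator_of_mem (show l ∈ {l : Fin m → ℤ | 0 < ν (dyadicCube m n l)} from hpos)]
  · rw [Set.indicator_of_notMem
      (show l ∉ {l : Fin m → ℤ | 0 < ν (dyadicCube m n l)} from hpos)]
    have : ν (dyadicCube m n l) = 0 := by
      simpa [pos_iff_ne_zero] using hpos
    rw [this, ENNReal.toReal_zero, Real.zero_rpow hs]

lemma sum_toReal_le_one [IsProbabilityMeasure ν] :
    ∑ l ∈ boxIdx m n, (ν (dyadicCube m n l)).toReal ≤ 1 := by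
  rw [← ENNReal.toReal_sum (fun l _ => measure_ne_top ν _)]
  have : ∑ l ∈ boxIdx m n, ν (dyadicCube m n l) = ν (⋃ l ∈ boxIdx m n, dyadicCube m n l) :=
    (measure_biUnion_finset ((pairwiseDisjoint_dyadicCube m n).subset (Set.subset_univ _))
      (fun l _ => measurableSet_dyadicCube m n l)).symm
  rw [this]
  exact ENNReal.toReal_le_of_le_ofReal zero_le_one (by simpa using prob_le_one)

end MeasureLemmas

/-! ### Analytic inequalities -/

/-- Concavity (power-mean) bound: for nonnegative `a` with `∑ a ≤ 1` and `0 < s < 1`,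
`∑ a^s ≤ card^(1-s)`. -/
lemma sum_rpow_le {ι : Type*} (B : Finset ι) (a : ι → ℝ) (ha : ∀ i ∈ B, 0 ≤ a i)
    (hsum : ∑ i ∈ B, a i ≤ 1) {s : ℝ} (hs0 : 0 < s) (hs1 : s < 1) :
    ∑ i ∈ B, a i ^ s ≤ (B.card : ℝ) ^ (1 - s) := by
  have hT : (0:ℝ) ≤ ∑ i ∈ B, a i ^ s :=
    Finset.sum_nonneg fun i hi => Real.rpow_nonneg (ha i hi) s
  have key := Real.rpow_sum_le_const_mul_sum_rpow_of_nonneg (s := B) (f := fun i => a i ^ s)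
    (p := 1/s) (by rw [le_div_iff₀ hs0]; linarith)
    (fun i hi => Real.rpow_nonneg (ha i hi) s)
  have hsimp : ∑ i ∈ B, ((a i ^ s) ^ (1/s)) = ∑ i ∈ B, a i := by
    apply Finset.sum_congr rfl
    intro i hi
    rw [← Real.rpow_mul (ha i hi), mul_one_div_cancel hs0.ne', Real.rpow_one]
  rw [hsimp] at key
  have hcard : (0:ℝ) ≤ (B.card : ℝ) := Nat.cast_nonneg _
  have key2 : (∑ i ∈ B, a i ^ s) ^ (1/s) ≤ (B.card : ℝ) ^ (1/s - 1) := by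
    calc (∑ i ∈ B, a i ^ s) ^ (1/s) ≤ (B.card : ℝ) ^ (1/s - 1) * ∑ i ∈ B, a i := key
    _ ≤ (B.card : ℝ) ^ (1/s - 1) * 1 := by
        apply mul_le_mul_of_nonneg_left hsum (Real.rpow_nonneg hcard _)
    _ = (B.card : ℝ) ^ (1/s - 1) := mul_one _
  have := Real.rpow_le_rpow (Real.rpow_nonneg hT _) key2 hs0.le
  rwa [← Real.rpow_mul hT, ← Real.rpow_mul hcard, one_div_mul_cancel hs0.ne', Real.rpow_one,
    sub_mul, one_div_mul_cancel hs0.ne', one_mul] at this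

/-- Jensen's inequality via Hölder: `∫ f^s ≤ (∫ f)^s (μ univ)^(1-s)` for `0 < s < 1`. -/
lemma jensen_rpow {α : Type*} [MeasurableSpace α] (μ : Measure α) {f : α → ℝ≥0∞}
    (hf : Measurable f) {s : ℝ} (hs0 : 0 < s) (hs1 : s < 1) :
    ∫⁻ x, f x ^ s ∂μ ≤ (∫⁻ x, f x ∂μ) ^ s * (μ Set.univ) ^ (1-s) := by
  have hpq : (1/s).HolderConjugate (1/(1-s)) :=
    Real.holderConjugate_one_div hs0 (by linarith) (by ring)
  have hmeas : AEMeasurable (fun x => f x ^ s) μ := (hf.pow_const s).aemeasurable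
  have key := ENNReal.lintegral_mul_le_Lp_mul_Lq μ hpq hmeas aemeasurable_const
    (g := fun _ => (1:ℝ≥0∞))
  simp only [Pi.mul_apply, mul_one, ENNReal.one_rpow, lintegral_one, lintegral_const] at key
  calc ∫⁻ x, f x ^ s ∂μ
      ≤ (∫⁻ x, (f x ^ s) ^ (1/s) ∂μ) ^ (1/(1/s)) * (μ Set.univ) ^ (1/(1/(1-s))) := by
        simpa using key
    _ = (∫⁻ x, f x ∂μ) ^ s * (μ Set.univ) ^ (1-s) := by
        rw [one_div_one_div, one_div_one_div]
        congr 1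
        congr 1
        apply lintegral_congr
        intro x
        rw [← ENNReal.rpow_mul, mul_one_div_cancel hs0.ne', ENNReal.rpow_one]

/-! ### Properties of the reference constant `∫ f^s` -/

section Cs

variable {m : ℕ} {ν : Measure (Fin m → ℝ)}

lemma cs_ne_top [IsProbabilityMeasure ν] {s : ℝ} (hs0 : 0 < s) (hs1 : s < 1) :
    (∫⁻ x in unitCube m, (ν.rnDeriv volume) x ^ s) ≠ ⊤ := by
  set f := ν.rnDeriv volume
  have hb : ∀ x, f x ^ s ≤ 1 + f x := by
    intro x
    rcases le_total (f x) 1 with h | h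
    · exact le_trans (ENNReal.rpow_le_one h hs0.le) le_self_add
    · calc f x ^ s ≤ f x ^ (1:ℝ) := ENNReal.rpow_le_rpow_of_exponent_le h hs1.le
        _ = f x := ENNReal.rpow_one _
        _ ≤ 1 + f x := le_add_self
  have : (∫⁻ x in unitCube m, f x ^ s) ≤ ∫⁻ x in unitCube m, (1 + f x) :=
    lintegral_mono hb
  have h2 : (∫⁻ x in unitCube m, (1 + f x)) = volume (unitCube m) + ∫⁻ x in unitCube m, f x := by
    rw [lintegral_add_left measurable_const]
    simp
  have h3 : (∫⁻ x in unitCube m, f x) ≤ 1 := by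
    rw [← withDensity_apply f (measurableSet_unitCube m)]
    exact le_trans (Measure.withDensity_rnDeriv_le ν volume _) prob_le_one
  refine ne_top_of_le_ne_top (by simp : (1 + 1 : ℝ≥0∞) ≠ ⊤) (this.trans ?_)
  rw [h2, volume_unitCube]
  exact add_le_add_right h3 _

lemma cs_ne_zero [IsProbabilityMeasure ν] (hν : ν (unitCube m) = 1)
    (hac : volume.withDensity (ν.rnDeriv volume) ≠ 0) {s : ℝ} (hs0 : 0 < s) :
    (∫⁻ x in unitCube m, (ν.rnDeriv volume) x ^ s) ≠ 0 := by
  set f := ν.rnDeriv volume with hf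
  intro h0
  have hfm : Measurable f := Measure.measurable_rnDeriv ν volume
  have hzero : f =ᵐ[volume.restrict (unitCube m)] 0 := by
    have := (lintegral_eq_zero_iff (hfm.pow_const s)).1 h0
    filter_upwards [this] with x hx
    simp only [Pi.zero_apply] at hx ⊢
    rcases ENNReal.rpow_eq_zero_iff.1 hx with ⟨h, _⟩ | ⟨_, h⟩
    · exact h
    · linarith
  have hU : volume.withDensity f (unitCube m) = 0 := by
    rw [withDensity_apply f (measurableSet_unitCube m)]
    rw [lintegral_congr_ae hzero]
    simp
  have hUc : volume.withDensity f (unitCube m)ᶜ = 0 := by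
    have hle := Measure.withDensity_rnDeriv_le ν volume (unitCube m)ᶜ
    have : ν (unitCube m)ᶜ = 0 := by
      rw [measure_compl (measurableSet_unitCube m) (measure_ne_top ν _), hν, measure_univ,
        tsub_self]
    exact le_antisymm (this ▸ hle) (zero_le)
  apply hac
  have huniv : volume.withDensity f Set.univ = 0 := by
    have := measure_union_le (μ := volume.withDensity f) (unitCube m) (unitCube m)ᶜ
    rw [Set.union_compl_self, hU, hUc, add_zero] at this
    exact le_antisymm this (zero_le)
  exact Measure.measure_univ_eq_zero.1 huniv

lemma lower_bound_ennreal [IsProbabilityMeasure ν] (n : ℕ) {s : ℝ} (hs0 : 0 < s) (hs1 : s < 1) :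
    (∫⁻ x in unitCube m, (ν.rnDeriv volume) x ^ s)
      ≤ (∑ l ∈ boxIdx m n, (ν (dyadicCube m n l)) ^ s)
        * (ENNReal.ofReal (((2:ℝ) ^ n)⁻¹) ^ m) ^ (1-s) := by
  set f := ν.rnDeriv volume
  have hfm : Measurable f := Measure.measurable_rnDeriv ν volume
  have hsplit : (∫⁻ x in unitCube m, f x ^ s)
      = ∑ l ∈ boxIdx m n, ∫⁻ x in dyadicCube m n l, f x ^ s := by
    rw [← iUnion_dyadicCube m n]
    exact lintegral_biUnion_finset
      ((pairwiseDisjoint_dyadicCube m n).subset (Set.subset_univ _))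
      (fun l _ => measurableSet_dyadicCube m n l) _
  rw [hsplit, Finset.sum_mul]
  apply Finset.sum_le_sum
  intro l _
  calc (∫⁻ x in dyadicCube m n l, f x ^ s)
      ≤ (∫⁻ x in dyadicCube m n l, f x) ^ s
        * ((volume.restrict (dyadicCube m n l)) Set.univ) ^ (1-s) :=
        jensen_rpow _ hfm hs0 hs1
    _ ≤ (ν (dyadicCube m n l)) ^ s * (ENNReal.ofReal (((2:ℝ) ^ n)⁻¹) ^ m) ^ (1-s) := by
        apply mul_le_mul'
        · apply ENNReal.rpow_le_rpow _ hs0.le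
          rw [← withDensity_apply f (measurableSet_dyadicCube m n l)]
          exact Measure.withDensity_rnDeriv_le ν volume _
        · rw [Measure.restrict_apply_univ, volume_dyadicCube]

end Cs

/-- **Remark 1.2 (absolutely continuous part)**: if the absolutely continuous part of
`ν` in its Lebesgue decomposition with respect to the Lebesgue measure is non-trivial,
then `β_ν(s) = m·(1-s)` for all `s ∈ (0,1)`. -/
theorem statement8 (m : ℕ) (hm : 0 < m) (ν : Measure (Fin m → ℝ))
    [IsProbabilityMeasure ν] (hν : ν (unitCube m) = 1)
    (hac : volume.withDensity (ν.rnDeriv volume) ≠ 0) :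
    ∀ s ∈ Set.Ioo (0 : ℝ) 1, lqSpectrum m ν s = (m : ℝ) * (1 - s) := by
  rintro s ⟨hs0, hs1⟩
  set c : ℝ := (∫⁻ x in unitCube m, (ν.rnDeriv volume) x ^ s).toReal with hc
  have hc0 : 0 < c := ENNReal.toReal_pos (cs_ne_zero hν hac hs0) (cs_ne_top hs0 hs1)
  set Sr : ℕ → ℝ := fun n => ∑ l ∈ boxIdx m n, (ν (dyadicCube m n l)).toReal ^ s with hSr
  have hcard : ∀ n : ℕ, ((boxIdx m n).card : ℝ) = (2:ℝ) ^ (n * m) := by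
    intro n; rw [card_boxIdx]; push_cast; ring
  -- upper bound
  have hub : ∀ n : ℕ, Sr n ≤ ((2:ℝ) ^ (n * m)) ^ (1 - s) := by
    intro n
    have := sum_rpow_le (boxIdx m n) (fun l => (ν (dyadicCube m n l)).toReal)
      (fun l _ => ENNReal.toReal_nonneg) sum_toReal_le_one hs0 hs1
    rwa [hcard n] at this
  -- lower bound
  have hlb : ∀ n : ℕ, c * ((2:ℝ) ^ (n * m)) ^ (1 - s) ≤ Sr n := by
    intro n
    set S : ℝ≥0∞ := ∑ l ∈ boxIdx m n, (ν (dyadicCube m n l)) ^ s with hS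
    set V : ℝ≥0∞ := ENNReal.ofReal (((2:ℝ) ^ n)⁻¹) ^ m with hV
    have hS_ne_top : S ≠ ⊤ := by
      rw [hS]
      exact (ENNReal.sum_lt_top.2 fun l _ =>
        ENNReal.rpow_lt_top_of_nonneg hs0.le (measure_ne_top ν _)).ne
    have hV_ne_top : V ≠ ⊤ := by
      rw [hV]; exact ENNReal.pow_ne_top ENNReal.ofReal_ne_top
    have hVs_ne_top : V ^ (1 - s) ≠ ⊤ :=
      ENNReal.rpow_ne_top_of_nonneg (by linarith) hV_ne_top
    have key := ENNReal.toReal_mono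
      (by exact ENNReal.mul_ne_top hS_ne_top hVs_ne_top)
      (lower_bound_ennreal n hs0 hs1)
    rw [ENNReal.toReal_mul] at key
    have hSr : S.toReal = Sr n := by
      rw [hS, ENNReal.toReal_sum (fun l _ =>
        ENNReal.rpow_ne_top_of_nonneg hs0.le (measure_ne_top ν _))]
      exact Finset.sum_congr rfl fun l _ => (ENNReal.toReal_rpow _ _).symm
    have hVr : (V ^ (1 - s)).toReal = (((2:ℝ) ^ (n * m))⁻¹) ^ (1 - s) := by
      rw [← ENNReal.toReal_rpow, hV, ENNReal.toReal_pow,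
        ENNReal.toReal_ofReal (by positivity), inv_pow, ← pow_mul]
    rw [hSr, hVr] at key
    have hD : (0:ℝ) < ((2:ℝ) ^ (n * m)) ^ (1 - s) :=
      Real.rpow_pos_of_pos (by positivity) _
    rw [Real.inv_rpow (by positivity)] at key
    calc c * ((2:ℝ) ^ (n * m)) ^ (1 - s)
        ≤ (Sr n * (((2:ℝ) ^ (n * m)) ^ (1 - s))⁻¹) * ((2:ℝ) ^ (n * m)) ^ (1 - s) := by
          apply mul_le_mul_of_nonneg_right key hD.le
      _ = Sr n := by field_simp
  have hSpos : ∀ n : ℕ, 0 < Sr n := fun n =>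
    lt_of_lt_of_le (by positivity) (hlb n)
  -- rewrite betaN
  have hbeta : ∀ n : ℕ, betaN m ν n s = Real.log (Sr n) / ((n:ℝ) * Real.log 2) := by
    intro n
    rw [betaN, tsum_eq_sum_box hν hs0.ne', Real.log_pow]
  have hlog2 : (0:ℝ) < Real.log 2 := Real.log_pos (by norm_num)
  have hlogD : ∀ n : ℕ, Real.log (((2:ℝ) ^ (n * m)) ^ (1 - s))
      = (m : ℝ) * (1 - s) * ((n:ℝ) * Real.log 2) := by
    intro n
    rw [Real.log_rpow (by positivity), Real.log_pow]
    push_cast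
    ring
  -- eventual bounds for n ≥ 1
  have hup' : ∀ᶠ n : ℕ in atTop, betaN m ν n s ≤ (m : ℝ) * (1 - s) := by
    filter_upwards [eventually_ge_atTop 1] with n hn
    have hL : (0:ℝ) < (n:ℝ) * Real.log 2 := by
      have : (1:ℝ) ≤ (n:ℝ) := by exact_mod_cast hn
      nlinarith
    rw [hbeta n, div_le_iff₀ hL]
    calc Real.log (Sr n) ≤ Real.log (((2:ℝ) ^ (n * m)) ^ (1 - s)) :=
          Real.log_le_log (hSpos n) (hub n)
      _ = (m : ℝ) * (1 - s) * ((n:ℝ) * Real.log 2) := hlogD n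
  have hlo' : ∀ᶠ n : ℕ in atTop,
      (m : ℝ) * (1 - s) + Real.log c * ((n:ℝ) * Real.log 2)⁻¹ ≤ betaN m ν n s := by
    filter_upwards [eventually_ge_atTop 1] with n hn
    have hL : (0:ℝ) < (n:ℝ) * Real.log 2 := by
      have : (1:ℝ) ≤ (n:ℝ) := by exact_mod_cast hn
      nlinarith
    rw [hbeta n, le_div_iff₀ hL]
    have h1 : Real.log (c * ((2:ℝ) ^ (n * m)) ^ (1 - s)) ≤ Real.log (Sr n) :=
      Real.log_le_log (by positivity) (hlb n)
    rw [Real.log_mul hc0.ne' (Real.rpow_pos_of_pos (by positivity) _).ne', hlogD n] at h1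
    calc ((m : ℝ) * (1 - s) + Real.log c * ((n:ℝ) * Real.log 2)⁻¹) * ((n:ℝ) * Real.log 2)
        = Real.log c + (m : ℝ) * (1 - s) * ((n:ℝ) * Real.log 2) := by
          field_simp
          ring
      _ ≤ Real.log (Sr n) := h1
  -- squeeze
  have htend_lo : Tendsto (fun n : ℕ => (m : ℝ) * (1 - s) + Real.log c * ((n:ℝ) * Real.log 2)⁻¹)
      atTop (𝓝 ((m : ℝ) * (1 - s))) := by
    have h1 : Tendsto (fun n : ℕ => (n:ℝ) * Real.log 2) atTop atTop :=
      (tendsto_natCast_atTop_atTop).atTop_mul_const hlog2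
    have h2 : Tendsto (fun n : ℕ => ((n:ℝ) * Real.log 2)⁻¹) atTop (𝓝 0) :=
      h1.inv_tendsto_atTop
    have h3 : Tendsto (fun n : ℕ => Real.log c * ((n:ℝ) * Real.log 2)⁻¹) atTop (𝓝 0) := by
      simpa using h2.const_mul (Real.log c)
    simpa using tendsto_const_nhds.add h3
  have htend : Tendsto (fun n => betaN m ν n s) atTop (𝓝 ((m : ℝ) * (1 - s))) :=
    tendsto_of_tendsto_of_tendsto_of_le_of_le' htend_lo tendsto_const_nhds hlo' hup'
  exact htend.limsup_eq
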